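/- Let X be a real Banach space, x₀ ∈ X, R > 0, and let A satisfy the variable Lipschitz condition on B[x₀,R] with a continuous nonnegative function k on [0,R]. Set a = ‖A x₀ − x₀‖, a₊(r) = a + ∫₀^r k(t) dt, assume a₊ has a fixed point in [0,R], and let r* be its smallest fixed point. Define r₀ = 0, r_{n+1} = a₊(r_n) and x_{n+1} = A x_n starting from x₀. Let ξ₀ ∈ B[x₀,R] with ρ₀ = ‖ξ₀ − x₀‖ and assume either ρ₀ ≤ r*, or a₊(s) < s for all s with r* < s ≤ ρ₀. Define ρ_{n+1} = a₊(ρ_n) and ξ_{n+1} = A ξ_n. Then for all n, ρ_n ≥ r_n and ‖ξ_n − x_n‖ ≤ ρ_n − r_n. -/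

import Mathlib

open intervalIntegral

lemma chain_estimate {X : Type*} [NormedAddCommGroup X] [NormedSpace ℝ X]
    (x₀ : X) (R : ℝ) (A : X → X) (k : ℝ → ℝ)
    (hk_cont : ContinuousOn k (Set.Icc 0 R))
    (hk_nonneg : ∀ t ∈ Set.Icc (0 : ℝ) R, 0 ≤ k t)
    (hLip : ∀ x₁ x₂ : X, ∀ r : ℝ, ‖x₁ - x₀‖ ≤ r → ‖x₂ - x₀‖ ≤ r →
      0 < r → r ≤ R → ‖A x₁ - A x₂‖ ≤ k r * ‖x₁ - x₂‖)
    (x ξ : X) (r ρ : ℝ) (hr : 0 ≤ r) (hrρ : r ≤ ρ) (hρR : ρ ≤ R)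
    (hx : ‖x - x₀‖ ≤ r) (hξx : ‖ξ - x‖ ≤ ρ - r) :
    ‖A ξ - A x‖ ≤ ∫ t in r..ρ, k t := by
  rcases eq_or_lt_of_le hrρ with heq | hlt
  · subst heq
    have : ξ = x := by
      have h1 : ‖ξ - x‖ ≤ 0 := by linarith
      have h2 := le_antisymm h1 (norm_nonneg _)
      rwa [norm_eq_zero, sub_eq_zero] at h2
    simp [this]
  have hd : 0 < ρ - r := by linarith
  refine le_of_forall_pos_le_add (fun ε hε => ?_)
  set ε' := ε / (ρ - r) with hε'def
  have hε' : 0 < ε' := div_pos hε hd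
  have huc : UniformContinuousOn k (Set.Icc 0 R) :=
    isCompact_Icc.uniformContinuousOn_of_continuous hk_cont
  rw [Metric.uniformContinuousOn_iff] at huc
  obtain ⟨δ, hδ, hδk⟩ := huc ε' hε'
  obtain ⟨N, hN⟩ := exists_nat_gt ((ρ - r) / δ)
  have hNpos : 0 < (N : ℝ) := lt_trans (div_pos hd hδ) hN
  have hNne : (N : ℝ) ≠ 0 := ne_of_gt hNpos
  set h := (ρ - r) / N with hhdef
  have hh : 0 < h := div_pos hd hNpos
  have hhδ : h < δ := by
    rw [hhdef, div_lt_iff₀ hNpos]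
    calc ρ - r = ((ρ - r) / δ) * δ := by field_simp
    _ < N * δ := mul_lt_mul_of_pos_right hN hδ
    _ = δ * N := mul_comm _ _
  set s : ℕ → ℝ := fun i => r + i * h with hsdef
  set y : ℕ → X := fun i => x + ((i : ℝ)/N) • (ξ - x) with hydef
  have hs0 : s 0 = r := by simp [hsdef]
  have hsN : s N = ρ := by
    simp only [hsdef, hhdef]
    field_simp
    ring
  have hsmono : ∀ i j : ℕ, i ≤ j → s i ≤ s j := by
    intro i j hij
    simp only [hsdef]
    have : (i:ℝ) ≤ j := Nat.cast_le.mpr hij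
    nlinarith
  have hsmem : ∀ i : ℕ, i ≤ N → s i ∈ Set.Icc (0:ℝ) R := by
    intro i hi
    constructor
    · simp only [hsdef]; positivity
    · calc s i ≤ s N := hsmono i N hi
      _ = ρ := hsN
      _ ≤ R := hρR
  have hy0 : y 0 = x := by simp [hydef]
  have hyN : y N = ξ := by
    simp only [hydef]
    rw [div_self hNne, one_smul]
    abel
  have hystep : ∀ i : ℕ, y (i+1) - y i = ((1:ℝ)/N) • (ξ - x) := by
    intro i
    simp only [hydef]
    rw [add_sub_add_left_eq_sub, ← sub_smul]
    congr 1
    push_cast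
    field_simp
    ring
  have hynorm : ∀ i : ℕ, ‖y (i+1) - y i‖ ≤ h := by
    intro i
    rw [hystep, norm_smul]
    simp only [Real.norm_eq_abs, abs_of_pos (by positivity : (0:ℝ) < 1/(N:ℝ))]
    calc (1/(N:ℝ)) * ‖ξ - x‖ ≤ (1/(N:ℝ)) * (ρ - r) :=
          mul_le_mul_of_nonneg_left hξx (by positivity)
    _ = h := by rw [hhdef]; ring
  have hyball : ∀ i : ℕ, i ≤ N → ‖y i - x₀‖ ≤ s i := by
    intro i hi
    have heq : y i - x₀ = (x - x₀) + ((i:ℝ)/N) • (ξ - x) := by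
      simp only [hydef]; abel
    rw [heq]
    calc ‖(x - x₀) + ((i:ℝ)/N) • (ξ - x)‖ ≤ ‖x - x₀‖ + ‖((i:ℝ)/N) • (ξ - x)‖ :=
          norm_add_le _ _
    _ ≤ r + ((i:ℝ)/N) * (ρ - r) := by
        apply add_le_add hx
        rw [norm_smul, Real.norm_eq_abs, abs_of_nonneg (by positivity)]
        exact mul_le_mul_of_nonneg_left hξx (by positivity)
    _ = s i := by simp only [hsdef, hhdef]; field_simp
  have hsub : ∀ i j : ℕ, i ≤ N → j ≤ N → Set.uIcc (s i) (s j) ⊆ Set.Icc (0:ℝ) R :=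
    fun i j hi hj => (Set.ordConnected_Icc).uIcc_subset (hsmem i hi) (hsmem j hj)
  have hint : ∀ i j : ℕ, i ≤ N → j ≤ N →
      IntervalIntegrable k MeasureTheory.volume (s i) (s j) :=
    fun i j hi hj => (hk_cont.mono (hsub i j hi hj)).intervalIntegrable
  have hintg : ∀ i j : ℕ, i ≤ N → j ≤ N →
      IntervalIntegrable (fun t => k t + ε') MeasureTheory.volume (s i) (s j) :=
    fun i j hi hj => (hint i j hi hj).add intervalIntegrable_const
  -- per-step estimate
  have hstep : ∀ i : ℕ, i < N →
      ‖A (y (i+1)) - A (y i)‖ ≤ ∫ t in s i..s (i+1), (k t + ε') := by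
    intro i hi
    have hi1 : i + 1 ≤ N := hi
    have hii : i ≤ N := le_of_lt hi
    have hsipos : 0 < s (i+1) := by
      have : (0:ℝ) < (i+1 : ℕ) * h := by
        apply mul_pos _ hh
        push_cast; positivity
      simp only [hsdef]; linarith
    have hsiR : s (i+1) ≤ R := (hsmem _ hi1).2
    have hb1 : ‖y (i+1) - x₀‖ ≤ s (i+1) := hyball _ hi1
    have hb2 : ‖y i - x₀‖ ≤ s (i+1) := le_trans (hyball _ hii) (hsmono i (i+1) (Nat.le_succ i))
    have hlip := hLip (y (i+1)) (y i) (s (i+1)) hb1 hb2 hsipos hsiR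
    have hknn : 0 ≤ k (s (i+1)) := hk_nonneg _ ⟨le_of_lt hsipos, hsiR⟩
    have h1 : ‖A (y (i+1)) - A (y i)‖ ≤ k (s (i+1)) * h :=
      le_trans hlip (mul_le_mul_of_nonneg_left (hynorm i) hknn)
    have h2 : k (s (i+1)) * h = ∫ t in s i..s (i+1), k (s (i+1)) := by
      rw [integral_const, smul_eq_mul]
      have : s (i+1) - s i = h := by simp only [hsdef]; push_cast; ring
      rw [this, mul_comm]
    rw [h2] at h1
    refine le_trans h1 (integral_mono_on (hsmono i (i+1) (Nat.le_succ i))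
      intervalIntegrable_const (hintg i (i+1) hii hi1) ?_)
    intro t ht
    have ht0 : (0:ℝ) ≤ t := le_trans (hsmem i hii).1 ht.1
    have htR : t ≤ R := le_trans ht.2 hsiR
    have hdist : dist (s (i+1)) t < δ := by
      rw [Real.dist_eq, abs_of_nonneg (by linarith [ht.2] : (0:ℝ) ≤ s (i+1) - t)]
      have : s (i+1) - s i = h := by simp only [hsdef]; push_cast; ring
      have := ht.1
      linarith [hhδ]
    have := hδk (s (i+1)) ⟨le_of_lt hsipos, hsiR⟩ t ⟨ht0, htR⟩ hdist
    rw [Real.dist_eq] at this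
    have := abs_lt.mp this
    linarith [this.1]
  -- telescope and sum
  have htel : A ξ - A x = ∑ i ∈ Finset.range N, (A (y (i+1)) - A (y i)) := by
    rw [Finset.sum_range_sub (fun i => A (y i)), hy0, hyN]
  have hsum : ∑ i ∈ Finset.range N, ∫ t in s i..s (i+1), (k t + ε')
      = ∫ t in (s 0)..(s N), (k t + ε') := by
    apply intervalIntegral.sum_integral_adjacent_intervals
    intro i hi
    exact hintg i (i+1) (le_of_lt hi) hi
  calc ‖A ξ - A x‖ = ‖∑ i ∈ Finset.range N, (A (y (i+1)) - A (y i))‖ := by rw [htel]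
  _ ≤ ∑ i ∈ Finset.range N, ‖A (y (i+1)) - A (y i)‖ := norm_sum_le _ _
  _ ≤ ∑ i ∈ Finset.range N, ∫ t in s i..s (i+1), (k t + ε') :=
      Finset.sum_le_sum (fun i hi => hstep i (Finset.mem_range.mp hi))
  _ = ∫ t in (s 0)..(s N), (k t + ε') := hsum
  _ = (∫ t in r..ρ, k t) + ε := by
      rw [hs0, hsN, integral_add ((hk_cont.mono ((Set.ordConnected_Icc).uIcc_subset
        ⟨hr, le_trans hrρ hρR⟩ ⟨le_trans hr hrρ, hρR⟩)).intervalIntegrable)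
        intervalIntegrable_const, integral_const, smul_eq_mul]
      congr 1
      rw [hε'def]
      field_simp
/-- Majorization of the approximations from a general initial point: with
`ρ₀ = ‖ξ₀ - x₀‖`, `ρ_{n+1} = a₊(ρ_n)`, `r₀ = 0`, `r_{n+1} = a₊(r_n)`,
`x_{n+1} = A x_n` and `ξ_{n+1} = A ξ_n`, one has `ρ_n ≥ r_n` and
`‖ξ_n - x_n‖ ≤ ρ_n - r_n` for all `n`. -/
theorem successive_approximations_comparison
    {X : Type*} [NormedAddCommGroup X] [NormedSpace ℝ X] [CompleteSpace X]
    (x₀ : X) (R : ℝ) (hR : 0 < R) (A : X → X) (k : ℝ → ℝ)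
    (hk_cont : ContinuousOn k (Set.Icc 0 R))
    (hk_nonneg : ∀ t ∈ Set.Icc (0 : ℝ) R, 0 ≤ k t)
    (hLip : ∀ x₁ x₂ : X, ∀ r : ℝ, ‖x₁ - x₀‖ ≤ r → ‖x₂ - x₀‖ ≤ r →
      0 < r → r ≤ R → ‖A x₁ - A x₂‖ ≤ k r * ‖x₁ - x₂‖)
    (a : ℝ) (ha : a = ‖A x₀ - x₀‖)
    (aplus : ℝ → ℝ) (haplus : ∀ r : ℝ, aplus r = a + ∫ t in (0 : ℝ)..r, k t)
    (rstar : ℝ) (hrstar_mem : rstar ∈ Set.Icc (0 : ℝ) R)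
    (hrstar_fix : aplus rstar = rstar)
    (hrstar_min : ∀ s ∈ Set.Icc (0 : ℝ) R, aplus s = s → rstar ≤ s)
    (r : ℕ → ℝ) (hr0 : r 0 = 0) (hr_succ : ∀ n : ℕ, r (n + 1) = aplus (r n))
    (x : ℕ → X) (hx0 : x 0 = x₀) (hx_succ : ∀ n : ℕ, x (n + 1) = A (x n))
    (ξ : ℕ → X) (hξ0 : ‖ξ 0 - x₀‖ ≤ R) (hξ_succ : ∀ n : ℕ, ξ (n + 1) = A (ξ n))
    (ρ : ℕ → ℝ) (hρ0 : ρ 0 = ‖ξ 0 - x₀‖) (hρ_succ : ∀ n : ℕ, ρ (n + 1) = aplus (ρ n))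
    (hadm : ρ 0 ≤ rstar ∨ ∀ s : ℝ, rstar < s → s ≤ ρ 0 → aplus s < s) :
    ∀ n : ℕ, r n ≤ ρ n ∧ ‖ξ n - x n‖ ≤ ρ n - r n := by
  -- basic facts
  have ha0 : 0 ≤ a := ha ▸ norm_nonneg _
  -- integral difference formula
  have hint : ∀ s t : ℝ, 0 ≤ s → s ≤ t → t ≤ R →
      IntervalIntegrable k MeasureTheory.volume s t := by
    intro s t hs hst htR
    exact (hk_cont.mono ((Set.ordConnected_Icc).uIcc_subset
      ⟨hs, le_trans hst htR⟩ ⟨le_trans hs hst, htR⟩)).intervalIntegrable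
  have hdiff : ∀ s t : ℝ, 0 ≤ s → s ≤ t → t ≤ R →
      aplus t - aplus s = ∫ u in s..t, k u := by
    intro s t hs hst htR
    rw [haplus, haplus]
    have := intervalIntegral.integral_add_adjacent_intervals
      (hint 0 s le_rfl hs (le_trans hst htR)) (hint s t hs hst htR)
    linarith [this]
  have hmono : ∀ s t : ℝ, 0 ≤ s → s ≤ t → t ≤ R → aplus s ≤ aplus t := by
    intro s t hs hst htR
    have h1 := hdiff s t hs hst htR
    have h2 : 0 ≤ ∫ u in s..t, k u := by
      apply intervalIntegral.integral_nonneg hst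
      intro u hu
      exact hk_nonneg u ⟨le_trans hs hu.1, le_trans hu.2 htR⟩
    linarith
  have haplus0 : aplus 0 = a := by
    rw [haplus]; simp
  set M := max (ρ 0) rstar with hMdef
  have hMR : M ≤ R := max_le (hρ0 ▸ hξ0) hrstar_mem.2
  -- strengthened invariant
  have key : ∀ n : ℕ, 0 ≤ r n ∧ r n ≤ rstar ∧ r n ≤ ρ n ∧ ρ n ≤ M ∧
      ‖x n - x₀‖ ≤ r n ∧ ‖ξ n - x n‖ ≤ ρ n - r n := by
    intro n
    induction n with
    | zero =>
      refine ⟨le_of_eq hr0.symm, hr0 ▸ hrstar_mem.1, ?_, le_max_left _ _, ?_, ?_⟩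
      · rw [hr0, hρ0]; exact norm_nonneg _
      · rw [hr0, hx0]; simp
      · rw [hρ0, hr0, hx0]; simp
    | succ n ih =>
      obtain ⟨h1, h2, h3, h4, h5, h6⟩ := ih
      have hρn0 : 0 ≤ ρ n := le_trans h1 h3
      have hρnR : ρ n ≤ R := le_trans h4 hMR
      have hrnR : r n ≤ R := le_trans h3 hρnR
      have hr1 : 0 ≤ r (n+1) := by
        rw [hr_succ]
        calc (0:ℝ) ≤ a := ha0
        _ = aplus 0 := haplus0.symm
        _ ≤ aplus (r n) := hmono 0 (r n) le_rfl h1 hrnR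
      have hr2 : r (n+1) ≤ rstar := by
        rw [hr_succ, ← hrstar_fix]
        exact hmono (r n) rstar h1 h2 hrstar_mem.2
      have hr3 : r (n+1) ≤ ρ (n+1) := by
        rw [hr_succ, hρ_succ]
        exact hmono (r n) (ρ n) h1 h3 hρnR
      have hρ4 : ρ (n+1) ≤ M := by
        rw [hρ_succ]
        rcases le_or_gt (ρ n) rstar with hc | hc
        · calc aplus (ρ n) ≤ aplus rstar := hmono (ρ n) rstar hρn0 hc hrstar_mem.2
          _ = rstar := hrstar_fix
          _ ≤ M := le_max_right _ _
        · have hρρ0 : ρ n ≤ ρ 0 := by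
            rcases max_cases (ρ 0) rstar with ⟨hm, _⟩ | ⟨hm, _⟩
            · exact le_trans h4 (le_of_eq hm)
            · exfalso; rw [hMdef, hm] at h4; linarith
          rcases hadm with hl | hrr
          · exfalso; linarith [le_trans hρρ0 hl]
          · exact le_trans (le_of_lt (hrr (ρ n) hc hρρ0)) (le_trans hρρ0 (le_max_left _ _))
      have hx5 : ‖x (n+1) - x₀‖ ≤ r (n+1) := by
        rw [hx_succ, hr_succ]
        have hkey := chain_estimate x₀ R A k hk_cont hk_nonneg hLip x₀ (x n) 0 (r n)
          le_rfl h1 hrnR (by simp) (by simpa using h5)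
        calc ‖A (x n) - x₀‖ ≤ ‖A (x n) - A x₀‖ + ‖A x₀ - x₀‖ :=
              norm_sub_le_norm_sub_add_norm_sub _ _ _
        _ ≤ (∫ u in (0:ℝ)..(r n), k u) + a := by rw [← ha]; exact add_le_add_left hkey a
        _ = aplus (r n) := by rw [haplus]; ring
      have hx6 : ‖ξ (n+1) - x (n+1)‖ ≤ ρ (n+1) - r (n+1) := by
        rw [hx_succ, hξ_succ, hρ_succ, hr_succ]
        have hkey := chain_estimate x₀ R A k hk_cont hk_nonneg hLip (x n) (ξ n)
          (r n) (ρ n) h1 h3 hρnR h5 h6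
        rw [← hdiff (r n) (ρ n) h1 h3 hρnR] at hkey
        exact hkey
      exact ⟨hr1, hr2, hr3, hρ4, hx5, hx6⟩
  intro n
  exact ⟨(key n).2.2.1, (key n).2.2.2.2.2⟩
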